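/- Let S be 𝖱 or 𝖱⁺, and let M₁, …, M_L be 2×2 matrices over MvPolynomial in the six variables x₁, y₁, x₂, y₂, x₃, y₃ over S, each entry being a single variable or a constant from S. Suppose that for every assignment of S-values to the six variables, the evaluation of the (1,1)-entry of the min-plus matrix product M₁ ⋯ M_L equals min( x₁ + y₁, x₂ + y₂, x₃ + y₃ ). Then for each i ∈ {1,2,3} there exists a path, i.e., a function s : Fin (L+1) → Fin 2 with s 0 = 0 and s L = 0, such that the polynomial ∏_{j=1}^{L} (M_j)_{s(j−1), s(j)} (product in the min-plus semiring of polynomials) equals c ⊗ x_i ⊗ y_i for some constant c ∈ S with c ≠ ∞; in particular this path contains exactly one occurrence of x_i, exactly one occurrence of y_i, and no occurrence of any of the other four variables. -/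

import Mathlib

open MvPolynomial

/-- `𝖱`: the min-plus semiring on `ℝ ∪ {∞}`. -/
abbrev TR : Type := Tropical (WithTop ℝ)

/-- `𝖱⁺`: the min-plus semiring on `ℝ≥0 ∪ {∞}`. -/
abbrev TRP : Type := Tropical (WithTop NNReal)

/-- In a (weakest) ABP every matrix entry is a single variable or a constant. -/
def IsABP {S V : Type} [CommSemiring S] {w L : ℕ}
    (M : Fin L → Matrix (Fin w) (Fin w) (MvPolynomial V S)) : Prop :=
  ∀ l i j, (∃ v, M l i j = X v) ∨ (∃ c, M l i j = C c)

/-- The function computed by a (weakest) width-`w` ABP: the evaluation at an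
assignment of the `(1,1)`-entry of the min-plus matrix product `M₁ ⋯ M_L`. -/
noncomputable def ABPeval {S V : Type} [CommSemiring S] {w L : ℕ} [NeZero w]
    (M : Fin L → Matrix (Fin w) (Fin w) (MvPolynomial V S)) (a : V → S) : S :=
  eval a ((List.ofFn M).prod 0 0)

section Aux
open Tropical


theorem entry_prod {R : Type} [CommSemiring R] {n : ℕ} :
    ∀ {L : ℕ} (M : Fin L → Matrix (Fin n) (Fin n) R) (p q : Fin n),
    (List.ofFn M).prod p q =
      ∑ s : Fin (L+1) → Fin n,
        if s 0 = p ∧ s (Fin.last L) = q then ∏ j : Fin L, M j (s j.castSucc) (s j.succ)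
        else 0 := by
  intro L
  induction L with
  | zero =>
      intro M p q
      simp only [List.ofFn_zero, List.prod_nil]
      rw [← (Equiv.funUnique (Fin 1) (Fin n)).symm.sum_comp]
      simp only [Equiv.funUnique_symm_apply, Function.const_apply, Fin.prod_univ_zero]
      by_cases h : p = q
      · subst h
        rw [Matrix.one_apply_eq, Finset.sum_eq_single p] <;> simp +contextual
      · rw [Matrix.one_apply_ne h, Finset.sum_eq_zero]
        intro k _
        split_ifs with hk
        · exact absurd (hk.1.symm.trans hk.2) h
        · rfl
  | succ L ih =>
      intro M p q
      set cns : Fin n → (Fin (L+1) → Fin n) → (Fin (L+2) → Fin n) :=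
        fun k s => Fin.cons (α := fun _ => Fin n) k s with hcns
      have key : ∀ (k : Fin n) (s : Fin (L+1) → Fin n),
          (∏ j : Fin (L+1), M j (cns k s j.castSucc) (cns k s j.succ))
            = M 0 k (s 0) * ∏ j : Fin L, M j.succ (s j.castSucc) (s j.succ) := by
        intro k s
        rw [Fin.prod_univ_succ]
        have h1 : ∀ j : Fin L, cns k s j.succ.castSucc = s j.castSucc := fun j => by
          simp only [hcns, ← Fin.succ_castSucc, Fin.cons_succ]
        have h2 : ∀ j : Fin L, cns k s j.succ.succ = s j.succ := fun j => by simp [hcns]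
        have h0 : cns k s (0 : Fin (L+1)).castSucc = k := rfl
        have h0' : cns k s (0 : Fin (L+1)).succ = s 0 := by simp [hcns]
        simp only [h0, h0', h1, h2]
      have hmid : ∀ F : (Fin (L+2) → Fin n) → R,
          (∑ s : Fin (L+2) → Fin n, F s) = ∑ k : Fin n, ∑ s : Fin (L+1) → Fin n,
            F (cns k s) := by
        intro F
        rw [← (Fin.consEquiv (fun _ : Fin (L+2) => Fin n)).sum_comp, Fintype.sum_prod_type]
        rfl
      rw [hmid]
      rw [List.ofFn_succ, List.prod_cons, Matrix.mul_apply]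
      have lhs_eq : ∀ k : Fin n,
          M 0 p k * (List.ofFn fun j : Fin L => M j.succ).prod k q
            = ∑ s : Fin (L+1) → Fin n,
                if s 0 = k ∧ s (Fin.last L) = q then
                  M 0 p k * ∏ j : Fin L, M j.succ (s j.castSucc) (s j.succ) else 0 := by
        intro k
        rw [ih (fun j => M j.succ) k q, Finset.mul_sum]
        exact Finset.sum_congr rfl fun s _ => by rw [mul_ite, mul_zero]
      simp only [lhs_eq]
      have rhs_eq : ∀ s : Fin (L+1) → Fin n, ∀ k : Fin n,
          (if cns k s 0 = p ∧ cns k s (Fin.last (L+1)) = q then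
              ∏ j : Fin (L+1), M j (cns k s j.castSucc) (cns k s j.succ) else 0)
            = if k = p ∧ s (Fin.last L) = q then
                M 0 k (s 0) * ∏ j : Fin L, M j.succ (s j.castSucc) (s j.succ) else 0 := by
        intro s k
        rw [key]
        have h1 : cns k s 0 = k := rfl
        have h2 : cns k s (Fin.last (L+1)) = s (Fin.last L) := by
          simp only [hcns, ← Fin.succ_last, Fin.cons_succ]
        rw [h1, h2]
      rw [Finset.sum_comm (γ := Fin n)]
      conv_rhs => rw [Finset.sum_comm]
      refine Finset.sum_congr rfl fun s _ => ?_
      simp only [rhs_eq]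
      by_cases hq : s (Fin.last L) = q
      · simp only [hq, and_true]
        rw [Finset.sum_ite_eq Finset.univ (s 0) (fun k => M 0 p k * _),
          Finset.sum_ite_eq' Finset.univ p (fun k => M 0 k (s 0) * _)]
        simp
      · simp [hq]


lemma prod_entries_decomp {S V : Type} [CommSemiring S] [Fintype V] [DecidableEq V]
    {L : ℕ} (e : Fin L → MvPolynomial V S)
    (he : ∀ j, (∃ v, e j = X v) ∨ (∃ c, e j = C c)) :
    ∃ (c : S) (d : V → ℕ), (∏ j, e j) = C c * ∏ v : V, X v ^ d v := by
  classical
  refine Finset.prod_induction e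
    (fun f => ∃ (c : S) (d : V → ℕ), f = C c * ∏ v : V, X v ^ d v) ?_ ?_ ?_
  · rintro f g ⟨c1, d1, h1⟩ ⟨c2, d2, h2⟩
    refine ⟨c1 * c2, fun v => d1 v + d2 v, ?_⟩
    have hp : (∏ v : V, X v ^ (d1 v + d2 v) : MvPolynomial V S)
        = (∏ v : V, X v ^ d1 v) * ∏ v : V, X v ^ d2 v := by
      rw [← Finset.prod_mul_distrib]
      exact Finset.prod_congr rfl fun v _ => pow_add _ _ _
    rw [h1, h2, C_mul, hp]
    ring
  · exact ⟨1, fun _ => 0, by simp⟩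
  · intro j _
    rcases he j with ⟨v, hv⟩ | ⟨c, hc⟩
    · refine ⟨1, fun w => if w = v then 1 else 0, ?_⟩
      have hp : (∏ w : V, X w ^ (if w = v then 1 else 0) : MvPolynomial V S)
          = ∏ w : V, if w = v then X w else 1 := by
        refine Finset.prod_congr rfl fun w _ => ?_
        split_ifs <;> simp
      rw [hv, hp, Finset.prod_ite_eq' Finset.univ v (fun w => X w)]
      simp
    · exact ⟨c, fun _ => 0, by simp [hc]⟩

lemma main {R : Type} [LinearOrderedAddCommMonoidWithTop R] [One R]
    (htop : (1 : R) + 1 ≠ ⊤)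
    {L : ℕ} (M : Fin L → Matrix (Fin 2) (Fin 2) (MvPolynomial (Fin 3 ⊕ Fin 3) (Tropical R)))
    (hABP : IsABP M)
    (hcomp : ∀ a : (Fin 3 ⊕ Fin 3) → Tropical R,
      ABPeval M a = ∑ i : Fin 3, a (Sum.inl i) * a (Sum.inr i))
    (i : Fin 3) :
    ∃ s : Fin (L + 1) → Fin 2, s 0 = 0 ∧ s (Fin.last L) = 0 ∧
      ∃ (c : R) (A B : ℕ), c ≠ ⊤ ∧
        (∏ j : Fin L, M j (s j.castSucc) (s j.succ))
          = C (trop c) * (X (Sum.inl i) ^ A * X (Sum.inr i) ^ B) ∧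
        c + A • (1 : R) + B • (1 : R) = 1 + 1 ∧
        ∀ u v : R, u + v ≤ c + A • u + B • v := by
  classical
  set xi : Fin 3 ⊕ Fin 3 := Sum.inl i with hxi
  set yi : Fin 3 ⊕ Fin 3 := Sum.inr i with hyi
  have hxy : xi ≠ yi := by simp [hxi, hyi]
  set a : R → R → (Fin 3 ⊕ Fin 3) → Tropical R := fun u v w =>
    if w = xi then trop u else if w = yi then trop v else 0 with ha
  have ha_eval : ∀ u v, ABPeval M (a u v) = trop (u + v) := by
    intro u v
    rw [hcomp]
    rw [Finset.sum_eq_single i]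
    · have h1 : a u v (Sum.inl i) = trop u := if_pos rfl
      have h2 : a u v (Sum.inr i) = trop v := by
        rw [ha]
        simp only []
        rw [if_neg (by simp [hxi])]
        simp [hyi]
      rw [h1, h2, ← trop_add]
    · intro b _ hb
      have hz : a u v (Sum.inl b) = 0 := by
        rw [ha]
        simp only []
        rw [if_neg (by simp [hxi, hb]), if_neg (by simp [hyi])]
      rw [hz, zero_mul]
    · simp
  choose cs ds hdecomp using fun s : Fin (L+1) → Fin 2 =>
    prod_entries_decomp (fun j => M j (s j.castSucc) (s j.succ))
      (fun j => hABP j _ _)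
  set F : R → R → (Fin (L+1) → Fin 2) → Tropical R := fun u v s =>
    if s 0 = 0 ∧ s (Fin.last L) = 0 then
      eval (a u v) (∏ j : Fin L, M j (s j.castSucc) (s j.succ)) else 0 with hF
  have hsum : ∀ u v : R, (∑ s : Fin (L+1) → Fin 2, F u v s) = trop (u + v) := by
    intro u v
    rw [← ha_eval u v]
    show _ = eval (a u v) ((List.ofFn M).prod 0 0)
    rw [entry_prod M 0 0, map_sum]
    exact Finset.sum_congr rfl fun s _ => by
      rw [hF]
      simp only []
      rw [apply_ite (eval (a u v)), map_zero]
  have hinf : ∀ u v : R,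
      (Finset.univ.inf fun s : Fin (L+1) → Fin 2 => untrop (F u v s)) = u + v := by
    intro u v
    have := Finset.untrop_sum' Finset.univ (F u v)
    rw [hsum u v, untrop_trop] at this
    exact this.symm
  have hle : ∀ (u v : R) (s : Fin (L+1) → Fin 2), u + v ≤ untrop (F u v s) := by
    intro u v s
    rw [← hinf u v]
    exact Finset.inf_le (Finset.mem_univ s)
  obtain ⟨s0, -, hs0⟩ := Finset.exists_mem_eq_inf Finset.univ
    Finset.univ_nonempty (fun s : Fin (L+1) → Fin 2 => untrop (F 1 1 s))
  rw [hinf 1 1] at hs0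
  have hcond : s0 0 = 0 ∧ s0 (Fin.last L) = 0 := by
    by_contra h
    rw [hF] at hs0
    simp only [] at hs0
    rw [if_neg h, untrop_zero] at hs0
    exact htop hs0
  have hW11 : untrop (eval (a 1 1) (∏ j : Fin L, M j (s0 j.castSucc) (s0 j.succ)))
      = 1 + 1 := by
    rw [hF] at hs0
    simp only [] at hs0
    rw [if_pos hcond] at hs0
    exact hs0.symm
  have heval : ∀ u v : R, eval (a u v) (∏ j : Fin L, M j (s0 j.castSucc) (s0 j.succ))
      = cs s0 * ∏ w : Fin 3 ⊕ Fin 3, (a u v w) ^ (ds s0 w) := by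
    intro u v
    rw [hdecomp s0]
    rw [map_mul, eval_C, map_prod]
    congr 1
    exact Finset.prod_congr rfl fun w _ => by rw [map_pow, eval_X]
  -- no other variables
  have hother : ∀ w, w ≠ xi → w ≠ yi → ds s0 w = 0 := by
    intro w hw1 hw2
    by_contra hne
    have haw : a 1 1 w = 0 := by
      rw [ha]; simp only []; rw [if_neg hw1, if_neg hw2]
    have hz : eval (a 1 1) (∏ j : Fin L, M j (s0 j.castSucc) (s0 j.succ)) = 0 := by
      rw [heval 1 1,
        Finset.prod_eq_zero (Finset.mem_univ w) (by rw [haw]; exact zero_pow hne), mul_zero]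
    rw [hz, untrop_zero] at hW11
    exact htop hW11.symm
  have hpair : ∀ u v : R, (∏ w : Fin 3 ⊕ Fin 3, (a u v w) ^ (ds s0 w))
      = trop u ^ (ds s0 xi) * trop v ^ (ds s0 yi) := by
    intro u v
    rw [← Finset.prod_subset (Finset.subset_univ ({xi, yi} : Finset (Fin 3 ⊕ Fin 3)))
      (fun w _ hw => ?_)]
    · rw [Finset.prod_pair hxy]
      congr 1
      · rw [show a u v xi = trop u from if_pos rfl]
      · have : a u v yi = trop v := by
          rw [ha]; simp only []; rw [if_neg (Ne.symm hxy)]; simp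
        rw [this]
    · simp only [Finset.mem_insert, Finset.mem_singleton, not_or] at hw
      rw [hother w hw.1 hw.2, pow_zero]
  have hcne : untrop (cs s0) ≠ ⊤ := by
    intro h
    have hz : eval (a 1 1) (∏ j : Fin L, M j (s0 j.castSucc) (s0 j.succ)) = 0 := by
      rw [heval 1 1, show cs s0 = 0 from untrop_injective (by rw [h, untrop_zero]), zero_mul]
    rw [hz, untrop_zero] at hW11
    exact htop hW11.symm
  refine ⟨s0, hcond.1, hcond.2, untrop (cs s0), ds s0 xi, ds s0 yi, hcne, ?_, ?_, ?_⟩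
  · rw [hdecomp s0, trop_untrop]
    congr 1
    rw [← Finset.prod_subset (Finset.subset_univ ({xi, yi} : Finset (Fin 3 ⊕ Fin 3)))
      (fun w _ hw => ?_)]
    · rw [Finset.prod_pair hxy]
    · simp only [Finset.mem_insert, Finset.mem_singleton, not_or] at hw
      rw [hother w hw.1 hw.2, pow_zero]
  · rw [heval 1 1, hpair 1 1] at hW11
    simp only [untrop_mul, untrop_pow, untrop_trop] at hW11
    rw [add_assoc]
    exact hW11
  · intro u v
    have h := hle u v s0
    rw [hF] at h
    simp only [] at h
    rw [if_pos hcond, heval u v, hpair u v] at h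
    simp only [untrop_mul, untrop_pow, untrop_trop] at h
    rw [add_assoc]
    exact h



lemma arithR (c0 : ℝ) (A B : ℕ)
    (heq : (↑c0 : WithTop ℝ) + A • (1 : WithTop ℝ) + B • (1 : WithTop ℝ) = 1 + 1)
    (hineq : ∀ u v : WithTop ℝ, u + v ≤ ↑c0 + A • u + B • v) :
    A = 1 ∧ B = 1 := by
  rw [← WithTop.coe_one, ← WithTop.coe_nsmul, ← WithTop.coe_nsmul, ← WithTop.coe_add,
    ← WithTop.coe_add, ← WithTop.coe_add, WithTop.coe_inj] at heq
  simp only [nsmul_eq_mul, mul_one] at heq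
  have hx : ∀ x y : ℝ, x + y ≤ c0 + A * x + B * y := by
    intro x y
    have h := hineq ↑x ↑y
    rw [← WithTop.coe_nsmul, ← WithTop.coe_nsmul, ← WithTop.coe_add, ← WithTop.coe_add,
      ← WithTop.coe_add, WithTop.coe_le_coe] at h
    simpa [nsmul_eq_mul] using h
  have habs1 : c0 ≤ |c0| := le_abs_self c0
  have habs2 : -|c0| ≤ c0 := neg_abs_le c0
  have hA1 : 1 ≤ A := by
    by_contra h
    have hA0 : (A : ℝ) = 0 := by
      have : A = 0 := by omega
      simp [this]
    have := hx (c0 + 1) 0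
    rw [hA0] at this
    linarith
  have hB1 : 1 ≤ B := by
    by_contra h
    have hB0 : (B : ℝ) = 0 := by
      have : B = 0 := by omega
      simp [this]
    have := hx 0 (c0 + 1)
    rw [hB0] at this
    linarith
  have hA2 : A ≤ 1 := by
    by_contra h
    have h2 : (2 : ℝ) ≤ A := by exact_mod_cast (by omega : 2 ≤ A)
    have := hx (-(|c0| + 1)) 0
    nlinarith
  have hB2 : B ≤ 1 := by
    by_contra h
    have h2 : (2 : ℝ) ≤ B := by exact_mod_cast (by omega : 2 ≤ B)
    have := hx 0 (-(|c0| + 1))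
    nlinarith
  exact ⟨le_antisymm hA2 hA1, le_antisymm hB2 hB1⟩

lemma arithP (c0 : NNReal) (A B : ℕ)
    (heq : (↑c0 : WithTop NNReal) + A • (1 : WithTop NNReal) + B • (1 : WithTop NNReal) = 1 + 1)
    (hineq : ∀ u v : WithTop NNReal, u + v ≤ ↑c0 + A • u + B • v) :
    A = 1 ∧ B = 1 := by
  rw [← WithTop.coe_one, ← WithTop.coe_nsmul, ← WithTop.coe_nsmul, ← WithTop.coe_add,
    ← WithTop.coe_add, ← WithTop.coe_add, WithTop.coe_inj] at heq
  simp only [nsmul_eq_mul, mul_one] at heq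
  have heqR : (c0 : ℝ) + A + B = 2 := by
    have := congrArg (NNReal.toReal) heq
    push_cast at this
    linarith
  have hx : ∀ x y : NNReal, (x : ℝ) + y ≤ c0 + A * x + B * y := by
    intro x y
    have h := hineq ↑x ↑y
    rw [← WithTop.coe_nsmul, ← WithTop.coe_nsmul, ← WithTop.coe_add, ← WithTop.coe_add,
      ← WithTop.coe_add, WithTop.coe_le_coe] at h
    simp only [nsmul_eq_mul] at h
    have := (NNReal.coe_le_coe).2 h
    push_cast at this
    linarith
  have hc0 : (0 : ℝ) ≤ c0 := c0.coe_nonneg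
  have hA1 : 1 ≤ A := by
    by_contra h
    have hA0 : (A : ℝ) = 0 := by
      have : A = 0 := by omega
      simp [this]
    have := hx (c0 + 1) 0
    rw [hA0] at this
    push_cast at this
    linarith
  have hB1 : 1 ≤ B := by
    by_contra h
    have hB0 : (B : ℝ) = 0 := by
      have : B = 0 := by omega
      simp [this]
    have := hx 0 (c0 + 1)
    rw [hB0] at this
    push_cast at this
    linarith
  have hA1R : (1 : ℝ) ≤ A := by exact_mod_cast hA1
  have hB1R : (1 : ℝ) ≤ B := by exact_mod_cast hB1
  have hA2 : A ≤ 1 := by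
    have : (A : ℝ) ≤ 1 := by linarith
    exact_mod_cast this
  have hB2 : B ≤ 1 := by
    have : (B : ℝ) ≤ 1 := by linarith
    exact_mod_cast this
  exact ⟨le_antisymm hA2 hA1, le_antisymm hB2 hB1⟩

end Aux

/-- if a width-2 ABP over `S = 𝖱` or `S = 𝖱⁺` in the six variables
`x₁,y₁,x₂,y₂,x₃,y₃` (encoded as `Sum.inl i = xᵢ`, `Sum.inr i = yᵢ`) computes
`min(x₁+y₁, x₂+y₂, x₃+y₃)` on every assignment, then for each `i ∈ {1,2,3}`
there is a source-to-sink path `s : Fin (L+1) → Fin 2` (with `s 0 = 0` and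
`s L = 0`) whose weight, the min-plus product `∏_{j=1}^{L} (M_j)_{s(j-1),s(j)}`,
equals `c ⊗ x_i ⊗ y_i` for some constant `c ≠ ∞`; in particular the path carries
exactly one `x_i`, exactly one `y_i`, and no other variable. -/
theorem stmt6 :
    (∀ (L : ℕ) (M : Fin L → Matrix (Fin 2) (Fin 2) (MvPolynomial (Fin 3 ⊕ Fin 3) TR)),
      IsABP M →
      (∀ a : (Fin 3 ⊕ Fin 3) → TR,
        ABPeval M a = ∑ i : Fin 3, a (Sum.inl i) * a (Sum.inr i)) →
      ∀ i : Fin 3, ∃ s : Fin (L + 1) → Fin 2, s 0 = 0 ∧ s (Fin.last L) = 0 ∧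
        ∃ c : TR, c ≠ 0 ∧
          (∏ j : Fin L, M j (s j.castSucc) (s j.succ))
            = C c * X (Sum.inl i) * X (Sum.inr i)) ∧
    (∀ (L : ℕ) (M : Fin L → Matrix (Fin 2) (Fin 2) (MvPolynomial (Fin 3 ⊕ Fin 3) TRP)),
      IsABP M →
      (∀ a : (Fin 3 ⊕ Fin 3) → TRP,
        ABPeval M a = ∑ i : Fin 3, a (Sum.inl i) * a (Sum.inr i)) →
      ∀ i : Fin 3, ∃ s : Fin (L + 1) → Fin 2, s 0 = 0 ∧ s (Fin.last L) = 0 ∧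
        ∃ c : TRP, c ≠ 0 ∧
          (∏ j : Fin L, M j (s j.castSucc) (s j.succ))
            = C c * X (Sum.inl i) * X (Sum.inr i)) := by
  constructor
  · intro L M hABP hcomp i
    obtain ⟨s, h0, hl, c, A, B, hc, hpoly, heq, hineq⟩ :=
      main (R := WithTop ℝ)
        (by rw [← WithTop.coe_one, ← WithTop.coe_add]; exact WithTop.coe_ne_top)
        M hABP hcomp i
    lift c to ℝ using hc with c0
    obtain ⟨hA, hB⟩ := arithR c0 A B heq hineq
    subst hA; subst hB
    refine ⟨s, h0, hl, Tropical.trop ↑c0, Tropical.trop_coe_ne_zero c0, ?_⟩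
    rw [hpoly, pow_one, pow_one, ← mul_assoc]
  · intro L M hABP hcomp i
    obtain ⟨s, h0, hl, c, A, B, hc, hpoly, heq, hineq⟩ :=
      main (R := WithTop NNReal)
        (by rw [← WithTop.coe_one, ← WithTop.coe_add]; exact WithTop.coe_ne_top)
        M hABP hcomp i
    lift c to NNReal using hc with c0
    obtain ⟨hA, hB⟩ := arithP c0 A B heq hineq
    subst hA; subst hB
    refine ⟨s, h0, hl, Tropical.trop ↑c0, Tropical.trop_coe_ne_zero c0, ?_⟩
    rw [hpoly, pow_one, pow_one, ← mul_assoc]
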